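/- If p < q, then lim_{s→0+} Ĝ(y,s) = (y + q/β)/(q − p). (Consequently, in open ASEP with ejection rate β and no injection and p < q, a single particle started at y is eventually ejected with probability one, and the expected ejection time is (y + q/β)/(q − p).) -/

import Mathlib

open Filter Topology
noncomputable section

/-- `ξ₊(s)`, the solution of `ε(ξ) = s` with the positive square root, where
`ε(ξ) = pξ⁻¹ + qξ - 1`. -/
def xiPlus (p q s : ℝ) : ℝ := (s + 1 + Real.sqrt ((s + 1) ^ 2 - 4 * p * q)) / (2 * q)

/-- The Laplace transform `Ĝ(y,s) = (1/s)[1 - β ξ₊(s)^{-y}/(q(ξ₊(s)-1) + β)]` of the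
probability that, in ASEP on `ℤ⁺` with ejection rate `β` at the boundary and no injection,
a single particle started at `y` has not yet been ejected at time `t`. -/
def Ghat (p q β : ℝ) (y : ℕ) (s : ℝ) : ℝ :=
  (1 / s) * (1 - β * xiPlus p q s ^ (-(y : ℤ)) / (q * (xiPlus p q s - 1) + β))

/-- Tracy–Widom, expected ejection time of a single particle in open ASEP with ejection
only, `p < q`: `lim_{s→0⁺} Ĝ(y,s) = (y + q/β)/(q - p)` (so the particle is eventually
ejected with probability one, with expected ejection time `(y + q/β)/(q - p)`). -/
theorem expected_ejection_time_p_lt_q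
    (p q β : ℝ) (hp : 0 < p) (hq : 0 < q) (hpq : p + q = 1) (hβ : 0 < β) (y : ℕ)
    (hpq' : p < q) :
    Tendsto (fun s => Ghat p q β y s) (𝓝[>] (0:ℝ))
      (𝓝 ((y + q / β) / (q - p))) := by
  set f : ℝ → ℝ := fun s => β * xiPlus p q s ^ (-(y : ℤ)) / (q * (xiPlus p q s - 1) + β)
    with hf_def
  have hc : (0:ℝ) < q - p := sub_pos.mpr hpq'
  have hc' : q - p ≠ 0 := ne_of_gt hc
  have hq' : q ≠ 0 := ne_of_gt hq
  have hβ' : β ≠ 0 := ne_of_gt hβ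
  have harg : ((0:ℝ) + 1) ^ 2 - 4 * p * q = (q - p) ^ 2 := by nlinarith
  have hsqrt0 : Real.sqrt (((0:ℝ) + 1) ^ 2 - 4 * p * q) = q - p := by
    rw [harg, Real.sqrt_sq hc.le]
  have hxi0 : xiPlus p q 0 = 1 := by
    unfold xiPlus
    rw [hsqrt0]
    field_simp
    linarith
  -- derivative of the inner function
  have hinner : HasDerivAt (fun s : ℝ => (s + 1) ^ 2 - 4 * p * q) 2 0 := by
    have h := (((hasDerivAt_id (0:ℝ)).add_const 1).pow 2).sub_const (4 * p * q)
    simpa using h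
  have hsqrt : HasDerivAt (fun s : ℝ => Real.sqrt ((s + 1) ^ 2 - 4 * p * q))
      (1 / (q - p)) 0 := by
    have h := hinner.sqrt (by rw [harg]; positivity)
    rw [hsqrt0] at h
    convert h using 1
    field_simp
  have hxi : HasDerivAt (fun s => xiPlus p q s) (1 / (q - p)) 0 := by
    have h := ((((hasDerivAt_id (0:ℝ)).add_const 1).add hsqrt).div_const (2 * q))
    refine h.congr_deriv ?_
    field_simp
    linarith
  -- derivative of numerator and denominator
  have hnum : HasDerivAt (fun s => β * xiPlus p q s ^ (-(y : ℤ)))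
      (β * ((-(y : ℤ)) * (1:ℝ) ^ ((-(y : ℤ)) - 1) * (1 / (q - p)))) 0 := by
    have hz := hasDerivAt_zpow (-(y : ℤ)) (xiPlus p q 0) (Or.inl (by rw [hxi0]; norm_num))
    have h := (hz.comp 0 hxi).const_mul β
    rw [hxi0] at h
    refine h.congr_deriv ?_
    push_cast
    ring
  have hden : HasDerivAt (fun s => q * (xiPlus p q s - 1) + β) (q * (1 / (q - p))) 0 := by
    exact ((hxi.sub_const 1).const_mul q).add_const β
  have hden0 : q * (xiPlus p q 0 - 1) + β ≠ 0 := by rw [hxi0]; simp [hβ']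
  have hf : HasDerivAt f (-((y + q / β) / (q - p))) 0 := by
    have h := hnum.div hden hden0
    rw [hxi0] at h
    refine h.congr_deriv ?_
    rw [one_zpow, one_zpow]
    field_simp
    push_cast
    ring
  -- convert derivative to the one-sided limit of Ghat
  have hslope := hasDerivAt_iff_tendsto_slope.mp hf
  have hslope' : Tendsto (slope f 0) (𝓝[>] (0:ℝ)) (𝓝 (-((y + q / β) / (q - p)))) :=
    hslope.mono_left (nhdsWithin_mono _ (fun x hx => ne_of_gt hx))
  have hneg := hslope'.neg
  rw [neg_neg] at hneg
  refine hneg.congr' ?_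
  filter_upwards [self_mem_nhdsWithin] with s hs
  have hs0 : (s:ℝ) ≠ 0 := ne_of_gt hs
  have hf0 : f 0 = 1 := by
    simp only [hf_def, hxi0, one_zpow]
    field_simp
    ring
  rw [slope_def_field, hf0, Ghat]
  field_simp [hf_def]
  simp only [hf_def]
  ring
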